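/- Let Θ ∈ ℂ^{m×n} satisfy RIP of order 2s with constant δ < 1, and let x be supported on T with |T| = s. Suppose z = Θx + n with ||n|| ≤ λ, and let T̂ ⊊ T' be any set with T ⊄ T̂ (there exists i ∈ T \ T̂) and |T̂ ∪ {i}| ≤ 2s. If |x(i)| > 2λ/√(1−δ) for all i ∈ T, then ||(I − Θ_{T̂} Θ_{T̂}^†) z|| > λ. -/

import Mathlib

/-- Restricted isometry property of order `k` with constant `δ`. -/
def RIP {m n : ℕ} (Θ : Matrix (Fin m) (Fin n) ℂ) (k : ℕ) (δ : ℝ) : Prop :=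
  ∀ x : Fin n → ℂ, (Finset.univ.filter (fun i => x i ≠ 0)).card ≤ k →
    (1 - δ) * (∑ i, ‖x i‖^2) ≤ (∑ r, ‖Θ.mulVec x r‖^2) ∧
    (∑ r, ‖Θ.mulVec x r‖^2) ≤ (1 + δ) * (∑ i, ‖x i‖^2)

/-- Column submatrix indexed by a finset `T`. -/
def colSub {m n : ℕ} (Θ : Matrix (Fin m) (Fin n) ℂ) (T : Finset (Fin n)) :
    Matrix (Fin m) T ℂ :=
  Θ.submatrix id Subtype.val

/-- Moore–Penrose pseudoinverse `(ΘᵀΘ)⁻¹Θᵀ` of a full-column-rank matrix. -/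
noncomputable def pinv {m n : ℕ} (Θ : Matrix (Fin m) (Fin n) ℂ) (T : Finset (Fin n)) :
    Matrix T (Fin m) ℂ :=
  ((colSub Θ T).conjTranspose * colSub Θ T)⁻¹ * (colSub Θ T).conjTranspose

open Matrix Finset

/-- Extension by zero of a vector on a subtype. -/
noncomputable def extZ {n : ℕ} (S : Finset (Fin n)) (v : S → ℂ) : Fin n → ℂ :=
  fun j => if h : j ∈ S then v ⟨j, h⟩ else 0

lemma mulVec_colSub {m n : ℕ} (Θ : Matrix (Fin m) (Fin n) ℂ) (S : Finset (Fin n))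
    (v : S → ℂ) : (colSub Θ S).mulVec v = Θ.mulVec (extZ S v) := by
  funext r
  simp only [Matrix.mulVec, dotProduct, colSub, Matrix.submatrix_apply, id]
  have h1 : ∑ x : Fin n, Θ r x * extZ S v x = ∑ x ∈ S, Θ r x * extZ S v x :=
    (Finset.sum_subset (Finset.subset_univ S) (fun x _ hx => by simp [extZ, hx])).symm
  rw [h1, ← Finset.sum_attach S (fun j => Θ r j * extZ S v j)]
  exact Finset.sum_congr rfl fun j _ => by simp [extZ, j.2]

lemma support_extZ {n : ℕ} (S : Finset (Fin n)) (v : S → ℂ) :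
    (Finset.univ.filter (fun j => extZ S v j ≠ 0)) ⊆ S := by
  intro j hj
  simp only [Finset.mem_filter] at hj
  by_contra h
  exact hj.2 (by simp [extZ, h])

lemma dot_self_re {k : ℕ} (w : Fin k → ℂ) : (star w ⬝ᵥ w).re = ∑ r, ‖w r‖^2 := by
  simp only [dotProduct, Complex.re_sum, Pi.star_apply,
    Complex.sq_norm, Complex.normSq_apply, Complex.mul_re, Complex.star_def,
    Complex.conj_re, Complex.conj_im]
  exact Finset.sum_congr rfl fun x _ => by ring

lemma proj_contraction {k : ℕ} (Q : Matrix (Fin k) (Fin k) ℂ)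
    (hherm : Qᴴ = Q) (hidem : Q * Q = Q) (v : Fin k → ℂ) :
    ∑ r, ‖(v - Q *ᵥ v) r‖^2 ≤ ∑ r, ‖v r‖^2 := by
  set w := Q *ᵥ v with hw
  set p := v - w with hp
  have hQp : Q *ᵥ p = 0 := by
    rw [hp, Matrix.mulVec_sub, hw, Matrix.mulVec_mulVec, hidem, sub_self]
  have horth : star w ⬝ᵥ p = 0 := by
    rw [hw, Matrix.star_mulVec, ← Matrix.dotProduct_mulVec, hherm, hQp, dotProduct_zero]
  have horth2 : star p ⬝ᵥ w = 0 := by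
    rw [Matrix.star_dotProduct, horth, star_zero]
  have hv : v = p + w := by rw [hp]; abel
  have hsplit : star v ⬝ᵥ v = star p ⬝ᵥ p + star w ⬝ᵥ w := by
    calc star v ⬝ᵥ v = star (p + w) ⬝ᵥ (p + w) := by rw [← hv]
    _ = star p ⬝ᵥ p + star p ⬝ᵥ w + (star w ⬝ᵥ p + star w ⬝ᵥ w) := by
        rw [star_add, add_dotProduct, dotProduct_add, dotProduct_add]
    _ = star p ⬝ᵥ p + star w ⬝ᵥ w := by rw [horth, horth2]; ring
  have hre := congrArg Complex.re hsplit
  rw [dot_self_re, Complex.add_re, dot_self_re, dot_self_re] at hre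
  have hwpos : (0:ℝ) ≤ ∑ r, ‖w r‖^2 :=
    Finset.sum_nonneg fun r _ => sq_nonneg _
  linarith

theorem residual_exceeds_threshold (m n s : ℕ) (δ lam : ℝ) (hδ0 : 0 ≤ δ) (hδ : δ < 1)
    (hlam : 0 ≤ lam)
    (Θ : Matrix (Fin m) (Fin n) ℂ) (hRIP : RIP Θ (2*s) δ)
    (T : Finset (Fin n)) (hT : T.card = s)
    (x : Fin n → ℂ) (hsupp : ∀ j, j ∉ T → x j = 0)
    (nv z : Fin m → ℂ) (hz : z = Θ.mulVec x + nv)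
    (hn : Real.sqrt (∑ r, ‖nv r‖^2) ≤ lam)
    (That : Finset (Fin n))
    (hi : ∃ i ∈ T, i ∉ That ∧ (insert i That).card ≤ 2*s)
    (hcard : (That ∪ T).card ≤ 2*s)
    (hbig : ∀ i ∈ T, 2 * lam / Real.sqrt (1 - δ) < ‖x i‖) :
    lam < Real.sqrt (∑ r, ‖(z - (colSub Θ That).mulVec ((pinv Θ That).mulVec z)) r‖^2) := by
  obtain ⟨i, hiT, hiThat, hicard⟩ := hi
  have h1δ : (0:ℝ) < 1 - δ := by linarith
  set A := colSub Θ That with hA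
  set B := Aᴴ * A with hB
  have hThatcard : That.card ≤ 2*s :=
    le_trans (Finset.card_le_card Finset.subset_union_left) hcard
  -- A is injective
  have hAinj : ∀ v : That → ℂ, A *ᵥ v = 0 → v = 0 := by
    intro v hv
    have hsupp' : (Finset.univ.filter (fun j => extZ That v j ≠ 0)).card ≤ 2*s :=
      le_trans (Finset.card_le_card (support_extZ That v)) hThatcard
    have hlow := (hRIP _ hsupp').1
    rw [← mulVec_colSub, ← hA, hv] at hlow
    simp only [Pi.zero_apply, norm_zero] at hlow
    have hz2 : ∑ j, ‖extZ That v j‖^2 ≤ 0 := by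
      have hsum : (1 - δ) * ∑ j, ‖extZ That v j‖^2 ≤ 0 := by
        simpa using hlow
      nlinarith
    have hall : ∀ j, extZ That v j = 0 := by
      intro j
      have h0 : ∑ j, ‖extZ That v j‖^2 = 0 :=
        le_antisymm hz2 (Finset.sum_nonneg fun j _ => sq_nonneg _)
      have := (Finset.sum_eq_zero_iff_of_nonneg
        (fun j (_ : j ∈ Finset.univ) => sq_nonneg ‖extZ That v j‖)).mp h0 j (Finset.mem_univ j)
      have hnorm : ‖extZ That v j‖ = 0 := by nlinarith [norm_nonneg (extZ That v j)]
      exact norm_eq_zero.mp hnorm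
    funext k
    have := hall k.val
    simpa [extZ, k.2] using this
  have hdet : IsUnit B.det := by
    by_contra h
    have hdet0 : B.det = 0 := by
      by_contra h0
      exact h (isUnit_iff_ne_zero.mpr h0)
    obtain ⟨v, hv0, hvB⟩ := Matrix.exists_mulVec_eq_zero_iff.mpr hdet0
    have key : star (A *ᵥ v) ⬝ᵥ (A *ᵥ v) = 0 := by
      rw [Matrix.star_mulVec, ← Matrix.dotProduct_mulVec, Matrix.mulVec_mulVec, ← hB, hvB,
        dotProduct_zero]
    have key2 : ∑ r, ‖(A *ᵥ v) r‖^2 = 0 := by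
      rw [← dot_self_re, key, Complex.zero_re]
    have hAv : A *ᵥ v = 0 := by
      funext r
      have := (Finset.sum_eq_zero_iff_of_nonneg
        (fun r (_ : r ∈ Finset.univ) => sq_nonneg ‖(A *ᵥ v) r‖)).mp key2 r (Finset.mem_univ r)
      have hnorm : ‖(A *ᵥ v) r‖ = 0 := by nlinarith [norm_nonneg ((A *ᵥ v) r)]
      exact norm_eq_zero.mp hnorm
    exact hv0 (hAinj v hAv)
  have hBherm : Bᴴ = B := by
    rw [hB, Matrix.conjTranspose_mul, Matrix.conjTranspose_conjTranspose]
  set Q := A * pinv Θ That with hQ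
  have hQ' : Q = A * (B⁻¹ * Aᴴ) := by
    rw [hQ, pinv, ← hA, ← hB]
  have hQherm : Qᴴ = Q := by
    rw [hQ', Matrix.conjTranspose_mul, Matrix.conjTranspose_mul,
      Matrix.conjTranspose_conjTranspose, Matrix.conjTranspose_nonsing_inv, hBherm,
      Matrix.mul_assoc]
  have hBBinv : B * (B⁻¹ * Aᴴ) = Aᴴ := by
    rw [← Matrix.mul_assoc, Matrix.mul_nonsing_inv B hdet, Matrix.one_mul]
  have hQidem : Q * Q = Q := by
    rw [hQ']
    calc A * (B⁻¹ * Aᴴ) * (A * (B⁻¹ * Aᴴ))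
        = A * (B⁻¹ * (Aᴴ * A * (B⁻¹ * Aᴴ))) := by
          simp only [Matrix.mul_assoc]
    _ = A * (B⁻¹ * Aᴴ) := by rw [← hB, hBBinv]
  -- norm on Euclidean space
  set e : (Fin m → ℂ) ≃ EuclideanSpace ℂ (Fin m) := (WithLp.equiv 2 (Fin m → ℂ)).symm with he
  have normE : ∀ v : Fin m → ℂ, Real.sqrt (∑ r, ‖v r‖^2) = ‖e v‖ := by
    intro v
    rw [EuclideanSpace.norm_eq]
    congr 1
  set u := (pinv Θ That).mulVec z with hu
  set a : Fin m → ℂ := Θ.mulVec x - Q *ᵥ (Θ.mulVec x) with ha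
  set b : Fin m → ℂ := nv - Q *ᵥ nv with hb
  have hres : z - A *ᵥ u = a + b := by
    rw [hu, Matrix.mulVec_mulVec, ← hQ, hz, ha, hb, Matrix.mulVec_add]
    abel
  -- bound on b
  have hbbound : Real.sqrt (∑ r, ‖b r‖^2) ≤ lam := by
    refine le_trans (le_trans (Real.sqrt_le_sqrt ?_) (le_refl _)) hn
    exact proj_contraction Q hQherm hQidem nv
  -- lower bound on a
  set w : Fin n → ℂ := x - extZ That ((pinv Θ That).mulVec (Θ.mulVec x)) with hw
  have haw : a = Θ.mulVec w := by
    rw [ha, hw, Matrix.mulVec_sub]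
    congr 1
    rw [hQ, hA, ← Matrix.mulVec_mulVec, mulVec_colSub]
  have hwsupp : (Finset.univ.filter (fun j => w j ≠ 0)) ⊆ That ∪ T := by
    intro j hj
    simp only [Finset.mem_filter] at hj
    by_contra hjn
    simp only [Finset.mem_union, not_or] at hjn
    apply hj.2
    rw [hw]
    simp [hsupp j hjn.2, extZ, hjn.1]
  have hwcard : (Finset.univ.filter (fun j => w j ≠ 0)).card ≤ 2*s :=
    le_trans (Finset.card_le_card hwsupp) hcard
  have hlow := (hRIP w hwcard).1
  have hwi : w i = x i := by
    rw [hw]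
    simp [extZ, hiThat]
  have hsingle : ‖x i‖^2 ≤ ∑ j, ‖w j‖^2 := by
    rw [← hwi]
    exact Finset.single_le_sum (fun j _ => sq_nonneg ‖w j‖) (Finset.mem_univ i)
  have hxi := hbig i hiT
  have hs1 : (0:ℝ) < Real.sqrt (1 - δ) := Real.sqrt_pos.mpr h1δ
  have hlow2 : (1 - δ) * ‖x i‖^2 ≤ ∑ r, ‖(Θ.mulVec w) r‖^2 := by
    calc (1 - δ) * ‖x i‖^2 ≤ (1 - δ) * ∑ j, ‖w j‖^2 := by
          exact mul_le_mul_of_nonneg_left hsingle h1δ.le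
    _ ≤ ∑ r, ‖(Θ.mulVec w) r‖^2 := hlow
  have habound : 2 * lam < Real.sqrt (∑ r, ‖a r‖^2) := by
    rw [haw]
    have h1 : Real.sqrt ((1 - δ) * ‖x i‖^2) ≤ Real.sqrt (∑ r, ‖(Θ.mulVec w) r‖^2) :=
      Real.sqrt_le_sqrt hlow2
    have h2 : Real.sqrt ((1 - δ) * ‖x i‖^2) = Real.sqrt (1 - δ) * ‖x i‖ := by
      rw [Real.sqrt_mul h1δ.le, Real.sqrt_sq (norm_nonneg _)]
    have h3 : 2 * lam < Real.sqrt (1 - δ) * ‖x i‖ := by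
      calc 2 * lam = Real.sqrt (1 - δ) * (2 * lam / Real.sqrt (1 - δ)) := by
            field_simp
      _ < Real.sqrt (1 - δ) * ‖x i‖ := by
            exact mul_lt_mul_of_pos_left hxi hs1
    linarith [h1, h2.symm.le]
  -- put together with triangle inequality
  have hgoal : z - A *ᵥ u = z - (colSub Θ That).mulVec ((pinv Θ That).mulVec z) := by
    rw [hu, hA]
  rw [← hgoal, hres, normE]
  have htri : ‖e a‖ ≤ ‖e (a + b)‖ + ‖e b‖ := by
    have h4 : e (a + b) = e a + e b := by rw [he]; exact rfl
    have h5 : e a = e (a + b) - e b := by rw [h4]; abel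
    rw [h5]
    exact norm_sub_le _ _
  rw [normE] at habound hbbound
  linarith
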